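/- Let p be a prime with p ≡ 1 (mod 4), t, b positive integers with t² + 4 = b²p, and 𝓕, 𝓛 the associated Lucas sequences. Let A, B, x₀, y₀ be integers satisfying 2p·x₀² = bp + (At + 2B), 2p·y₀² = bp − (At + 2B), and 2p·x₀·y₀ = Bt − 2A. Then for every integer n: bp·𝓕_{4n+1} − 𝓛_{4n+1}·A − 2B = 2p·(x₀𝓕_{2n} + y₀𝓕_{2n+1})² and bp·𝓕_{4n−1} + 𝓛_{4n−1}·A − 2B = 2p·(x₀𝓕_{2n} − y₀𝓕_{2n−1})². -/

import Mathlib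

private lemma seqEq (t : ℤ) (G H : ℤ → ℤ)
    (hG : ∀ k : ℤ, G (k + 2) = t * G (k + 1) + G k)
    (hH : ∀ k : ℤ, H (k + 2) = t * H (k + 1) + H k)
    (h0 : G 0 = H 0) (h1 : G 1 = H 1) : ∀ k : ℤ, G k = H k := by
  have key : ∀ k : ℤ, G k = H k ∧ G (k + 1) = H (k + 1) := by
    intro k
    induction k using Int.induction_on with
    | zero => exact ⟨h0, h1⟩
    | succ i ih =>
      refine ⟨ih.2, ?_⟩
      have hg := hG i
      have hh := hH i
      rw [show ((i : ℤ) + 1 + 1) = (i : ℤ) + 2 by ring, hg, hh, ih.1, ih.2]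
    | pred i ih =>
      have hg := hG (-(i : ℤ) - 1)
      have hh := hH (-(i : ℤ) - 1)
      rw [show -(i:ℤ) - 1 + 2 = -(i:ℤ) + 1 by ring,
        show -(i:ℤ) - 1 + 1 = -(i:ℤ) by ring] at hg hh
      constructor
      · linear_combination ih.2 - t * ih.1 - hg + hh
      · rw [show -(i:ℤ) - 1 + 1 = -(i:ℤ) by ring]; exact ih.1
  exact fun k => (key k).1

theorem stmt_13 (p : ℕ) (hp : p.Prime) (hp4 : p % 4 = 1)
    (t b : ℤ) (ht : 0 < t) (hb : 0 < b)
    (hpt : t ^ 2 + 4 = b ^ 2 * (p : ℤ))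
    (F L : ℤ → ℤ) (hF0 : F 0 = 0) (hF1 : F 1 = 1)
    (hF : ∀ k : ℤ, F (k + 2) = t * F (k + 1) + F k)
    (hL0 : L 0 = 2) (hL1 : L 1 = t)
    (hL : ∀ k : ℤ, L (k + 2) = t * L (k + 1) + L k)
    (A B x₀ y₀ : ℤ)
    (hx : 2 * (p : ℤ) * x₀ ^ 2 = b * p + (A * t + 2 * B))
    (hy : 2 * (p : ℤ) * y₀ ^ 2 = b * p - (A * t + 2 * B))
    (hxy : 2 * (p : ℤ) * x₀ * y₀ = B * t - 2 * A) :
    ∀ n : ℤ,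
      b * (p : ℤ) * F (4 * n + 1) - L (4 * n + 1) * A - 2 * B
        = 2 * (p : ℤ) * (x₀ * F (2 * n) + y₀ * F (2 * n + 1)) ^ 2 ∧
      b * (p : ℤ) * F (4 * n - 1) + L (4 * n - 1) * A - 2 * B
        = 2 * (p : ℤ) * (x₀ * F (2 * n) - y₀ * F (2 * n - 1)) ^ 2 := by
  -- basic values
  have hFm1 : F (-1) = 1 := by
    have h := hF (-1)
    rw [show (-1:ℤ) + 2 = 1 by norm_num, show (-1:ℤ) + 1 = 0 by norm_num, hF0, hF1] at h
    linarith
  have hF2 : F 2 = t := by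
    have h := hF 0
    rw [show (0:ℤ) + 2 = 2 by norm_num, show (0:ℤ) + 1 = 1 by norm_num, hF0, hF1] at h
    linarith
  -- L in terms of F
  have hLF : ∀ k : ℤ, L k = F (k + 1) + F (k - 1) := by
    refine seqEq t L (fun k => F (k + 1) + F (k - 1)) hL ?_ ?_ ?_
    · intro k
      show F (k + 2 + 1) + F (k + 2 - 1) = t * (F (k + 1 + 1) + F (k + 1 - 1)) + (F (k + 1) + F (k - 1))
      rw [show k + 2 + 1 = k + 3 by ring, show k + 2 - 1 = k + 1 by ring,
        show k + 1 + 1 = k + 2 by ring, show k + 1 - 1 = k by ring]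
      have h1 := hF (k + 1)
      rw [show k + 1 + 2 = k + 3 by ring, show k + 1 + 1 = k + 2 by ring] at h1
      have h2 := hF (k - 1)
      rw [show k - 1 + 2 = k + 1 by ring, show k - 1 + 1 = k by ring] at h2
      linear_combination h1 + h2
    · show L 0 = F (0 + 1) + F (0 - 1)
      rw [show (0:ℤ) + 1 = 1 by norm_num, show (0:ℤ) - 1 = -1 by norm_num, hF1, hFm1, hL0]
      norm_num
    · show L 1 = F (1 + 1) + F (1 - 1)
      rw [show (1:ℤ) + 1 = 2 by norm_num, show (1:ℤ) - 1 = 0 by norm_num, hF2, hF0, hL1]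
      ring
  -- addition formula
  have hadd : ∀ m k : ℤ, F (m + k) = F m * F (k + 1) + F (m - 1) * F k := by
    intro m
    refine seqEq t (fun k => F (m + k)) (fun k => F m * F (k + 1) + F (m - 1) * F k) ?_ ?_ ?_ ?_
    · intro k
      show F (m + (k + 2)) = t * F (m + (k + 1)) + F (m + k)
      rw [show m + (k + 2) = m + k + 2 by ring, show m + (k + 1) = m + k + 1 by ring]
      exact hF (m + k)
    · intro k
      show F m * F (k + 2 + 1) + F (m - 1) * F (k + 2)
          = t * (F m * F (k + 1 + 1) + F (m - 1) * F (k + 1)) + (F m * F (k + 1) + F (m - 1) * F k)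
      rw [show k + 2 + 1 = k + 3 by ring, show k + 1 + 1 = k + 2 by ring]
      have h1 := hF (k + 1)
      rw [show k + 1 + 2 = k + 3 by ring, show k + 1 + 1 = k + 2 by ring] at h1
      have h2 := hF k
      linear_combination F m * h1 + F (m - 1) * h2
    · show F (m + 0) = F m * F (0 + 1) + F (m - 1) * F 0
      rw [show m + (0:ℤ) = m by ring, show (0:ℤ) + 1 = 1 by norm_num, hF1, hF0]
      ring
    · show F (m + 1) = F m * F (1 + 1) + F (m - 1) * F 1
      rw [show (1:ℤ) + 1 = 2 by norm_num, hF2, hF1]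
      have h := hF (m - 1)
      rw [show m - 1 + 2 = m + 1 by ring, show m - 1 + 1 = m by ring] at h
      linear_combination h
  -- flip lemma for the Cassini-type invariant
  have dflip : ∀ k : ℤ, F (k + 2) ^ 2 - t * F (k + 1) * F (k + 2) - F (k + 1) ^ 2
      = -(F (k + 1) ^ 2 - t * F k * F (k + 1) - F k ^ 2) := by
    intro k
    linear_combination (F (k + 2) + F k) * hF k
  -- Cassini at even indices
  have cass : ∀ n : ℤ, F (2 * n + 1) ^ 2 - t * F (2 * n) * F (2 * n + 1) - F (2 * n) ^ 2 = 1 := by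
    intro n
    induction n using Int.induction_on with
    | zero =>
      rw [show (2:ℤ) * 0 + 1 = 1 by norm_num, show (2:ℤ) * 0 = 0 by norm_num, hF0, hF1]
      ring
    | succ i ih =>
      have d1 := dflip (2 * (i : ℤ))
      have d2 := dflip (2 * (i : ℤ) + 1)
      rw [show 2 * (i:ℤ) + 1 + 2 = 2 * i + 3 by ring,
        show 2 * (i:ℤ) + 1 + 1 = 2 * i + 2 by ring] at d2
      rw [show 2 * ((i:ℤ) + 1) + 1 = 2 * i + 3 by ring,
        show 2 * ((i:ℤ) + 1) = 2 * i + 2 by ring]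
      linear_combination ih + d2 - d1
    | pred i ih =>
      rw [show 2 * (-(i:ℤ)) + 1 = -(2 * (i:ℤ)) + 1 by ring,
        show 2 * (-(i:ℤ)) = -(2 * (i:ℤ)) by ring] at ih
      have da := dflip (-(2 * (i : ℤ)) - 2)
      rw [show -(2 * (i:ℤ)) - 2 + 2 = -(2 * (i:ℤ)) by ring,
        show -(2 * (i:ℤ)) - 2 + 1 = -(2 * (i:ℤ)) - 1 by ring] at da
      have db := dflip (-(2 * (i : ℤ)) - 1)
      rw [show -(2 * (i:ℤ)) - 1 + 2 = -(2 * (i:ℤ)) + 1 by ring,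
        show -(2 * (i:ℤ)) - 1 + 1 = -(2 * (i:ℤ)) by ring] at db
      rw [show 2 * (-(i:ℤ) - 1) + 1 = -(2 * (i:ℤ)) - 1 by ring,
        show 2 * (-(i:ℤ) - 1) = -(2 * (i:ℤ)) - 2 by ring]
      linear_combination ih - db + da
  intro n
  have c1 := cass n
  have r0 := hF (2 * n - 1)
  rw [show 2 * n - 1 + 2 = 2 * n + 1 by ring, show 2 * n - 1 + 1 = 2 * n by ring] at r0
  have r1 := hF (2 * n)
  have r2 := hF (2 * n - 2)
  rw [show 2 * n - 2 + 2 = 2 * n by ring, show 2 * n - 2 + 1 = 2 * n - 1 by ring] at r2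
  have c2 : F (2 * n) ^ 2 - t * F (2 * n - 1) * F (2 * n) - F (2 * n - 1) ^ 2 = -1 := by
    have dd := dflip (2 * n - 1)
    rw [show 2 * n - 1 + 2 = 2 * n + 1 by ring, show 2 * n - 1 + 1 = 2 * n by ring] at dd
    linarith [c1, dd]
  have e1 := hadd (2 * n + 1) (2 * n)
  rw [show 2 * n + 1 + 2 * n = 4 * n + 1 by ring, show 2 * n + 1 - 1 = 2 * n by ring] at e1
  have e2 := hadd (2 * n + 1) (2 * n + 1)
  rw [show 2 * n + 1 + (2 * n + 1) = 4 * n + 2 by ring, show 2 * n + 1 + 1 = 2 * n + 2 by ring,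
    show 2 * n + 1 - 1 = 2 * n by ring] at e2
  have e3 := hadd (2 * n + 1) (2 * n - 1)
  rw [show 2 * n + 1 + (2 * n - 1) = 4 * n by ring, show 2 * n - 1 + 1 = 2 * n by ring,
    show 2 * n + 1 - 1 = 2 * n by ring] at e3
  have e4 := hadd (2 * n) (2 * n - 1)
  rw [show 2 * n + (2 * n - 1) = 4 * n - 1 by ring, show 2 * n - 1 + 1 = 2 * n by ring] at e4
  have e5 := hadd (2 * n) (2 * n - 2)
  rw [show 2 * n + (2 * n - 2) = 4 * n - 2 by ring, show 2 * n - 2 + 1 = 2 * n - 1 by ring] at e5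
  have hL1' := hLF (4 * n + 1)
  rw [show 4 * n + 1 + 1 = 4 * n + 2 by ring, show 4 * n + 1 - 1 = 4 * n by ring] at hL1'
  have hL2' := hLF (4 * n - 1)
  rw [show 4 * n - 1 + 1 = 4 * n by ring, show 4 * n - 1 - 1 = 4 * n - 2 by ring] at hL2'
  have eL1 : L (4 * n + 1)
      = t * (F (2 * n + 1)) ^ 2 - t * (F (2 * n)) ^ 2 + 4 * F (2 * n) * F (2 * n + 1) := by
    rw [hL1', e2, e3, r1]
    linear_combination (-(F (2 * n))) * r0
  have eL2 : L (4 * n - 1)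
      = t * (F (2 * n)) ^ 2 - t * (F (2 * n - 1)) ^ 2 + 4 * F (2 * n) * F (2 * n - 1) := by
    rw [hL2', e3, e5]
    linear_combination F (2 * n) * r0 - F (2 * n - 1) * r2
  constructor
  · rw [e1, eL1]
    linear_combination (-(F (2 * n)) ^ 2) * hx + (-(F (2 * n + 1)) ^ 2) * hy
      + (-2 * F (2 * n) * F (2 * n + 1)) * hxy + 2 * B * c1
  · rw [e4, eL2]
    linear_combination (-(F (2 * n)) ^ 2) * hx + (-(F (2 * n - 1)) ^ 2) * hy
      + (2 * F (2 * n) * F (2 * n - 1)) * hxy + (-2 * B) * c2
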